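/- Fix d ≥ 1. Let c^1, c^2, c^3, c^4 ∈ ℂ[t] be given by c^i(t) = y_i·∏_{j=1}^d (t − θ_i^j) with all y_i ≠ 0, where the 2d numbers θ_3^1, …, θ_3^d, θ_4^1, …, θ_4^d are pairwise distinct. Suppose h(t) = c^1(t)c^2(t) + c^3(t)c^4(t) has degree 2d and has 2d pairwise distinct roots β_1, …, β_{2d}, all nonzero, none of which is a root of c^3 or of c^4, and suppose c^3, c^4 are not proportional over ℂ. For x = (x_3, x_4) ∈ ℂ^d × ℂ^d define H_i(x) = c^1(β_i)c^2(β_i) + y_3 y_4·∏_{j=1}^d (β_i − x_3^j)·∏_{j=1}^d (β_i − x_4^j) for i = 1, …, 2d. Then the 2d×2d Jacobian matrix of (H_1, …, H_{2d}) with respect to (x_3^1, …, x_3^d, x_4^1, …, x_4^d), evaluated at x = (θ_3, θ_4), has nonzero determinant. -/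

import Mathlib

open Polynomial

lemma cauchy_det_ne_zero {n : ℕ} (hn : 0 < n) (b g : Fin n → ℂ)
    (hb : Function.Injective b) (hg : Function.Injective g)
    (hbg : ∀ i j, b i - g j ≠ 0) :
    (Matrix.of fun i j => (b i - g j)⁻¹).det ≠ 0 := by
  classical
  intro hdet
  obtain ⟨v, hv, hmv⟩ := (Matrix.exists_mulVec_eq_zero_iff).2 hdet
  set p : ℂ[X] := ∑ j, Polynomial.C (v j) * ∏ k ∈ Finset.univ.erase j, (X - Polynomial.C (g k))
    with hp
  have hpdeg : p.natDegree < n := by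
    refine lt_of_le_of_lt (Polynomial.natDegree_sum_le_of_forall_le _ _ fun j _ => ?_)
      (by omega : n - 1 < n)
    refine le_trans (Polynomial.natDegree_C_mul_le _ _) ?_
    refine le_trans (Polynomial.natDegree_prod_le _ _) ?_
    refine le_of_eq ?_
    calc (∑ k ∈ Finset.univ.erase j, (X - Polynomial.C (g k)).natDegree)
        = ∑ k ∈ Finset.univ.erase j, 1 := by
          refine Finset.sum_congr rfl fun k _ => natDegree_X_sub_C _
      _ = n - 1 := by simp [Finset.card_erase_of_mem]
  have hpeval : ∀ i, p.eval (b i) = 0 := by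
    intro i
    have h0 : ∀ j, (∏ k ∈ Finset.univ.erase j, (b i - g k)) =
        (b i - g j)⁻¹ * ∏ k, (b i - g k) := by
      intro j
      field_simp [hbg i j]
      rw [mul_comm]; exact Finset.mul_prod_erase _ (fun k => b i - g k) (Finset.mem_univ j)
    have := congrFun hmv i
    simp only [Matrix.mulVec, dotProduct, Matrix.of_apply, Pi.zero_apply] at this
    simp only [hp, eval_finset_sum, eval_mul, eval_C, eval_prod, eval_sub, eval_X, h0]
    calc (∑ j, v j * ((b i - g j)⁻¹ * ∏ k, (b i - g k)))
        = (∏ k, (b i - g k)) * ∑ j, (b i - g j)⁻¹ * v j := by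
          rw [Finset.mul_sum]; refine Finset.sum_congr rfl fun j _ => by ring
      _ = 0 := by rw [this, mul_zero]
  have hp0 : p = 0 := by
    refine Polynomial.eq_zero_of_natDegree_lt_card_of_eval_eq_zero p hb hpeval ?_
    simpa using hpdeg
  apply hv
  funext j
  have := congrArg (Polynomial.eval (g j)) hp0
  simp only [hp, eval_finset_sum, eval_mul, eval_C, eval_prod, eval_sub, eval_X, eval_zero] at this
  rw [Finset.sum_eq_single j] at this
  · have hne : (∏ k ∈ Finset.univ.erase j, (g j - g k)) ≠ 0 := by
      refine Finset.prod_ne_zero_iff.2 fun k hk => ?_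
      have := Finset.ne_of_mem_erase hk
      exact sub_ne_zero.2 fun he => this (hg he.symm)
    have := mul_eq_zero.1 this
    simpa [hne] using this
  · intro j' _ hj'
    refine mul_eq_zero.2 (Or.inr (Finset.prod_eq_zero (Finset.mem_erase.2 ⟨hj'.symm, Finset.mem_univ j⟩) ?_))
    simp
  · simp

/-- the key determinant computation `J ≠ 0` in Proposition 3.1.
With `c^i(t) = y_i ∏_j (t − θ_i^j)`, `h = c¹c² + c³c⁴` of degree `2d` with `2d` pairwise
distinct nonzero roots `β_i` avoiding the roots of `c³` and `c⁴`, and `c³, c⁴` not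
proportional, the `2d × 2d` Jacobian matrix of
`H_i(x) = c¹(β_i)c²(β_i) + y₃y₄·∏_j (β_i − x₃^j)·∏_j (β_i − x₄^j)`
with respect to `(x₃, x₄)`, evaluated at `(θ₃, θ₄)`, has nonzero determinant. -/
theorem stmt10 (d : ℕ) (hd : 1 ≤ d)
    (y : Fin 5 → ℂ) (θ : Fin 5 → Fin d → ℂ)
    (c : Fin 5 → Polynomial ℂ)
    (hc : ∀ i, c i = Polynomial.C (y i) * ∏ j, (Polynomial.X - Polynomial.C (θ i j)))
    (hy : ∀ i, y i ≠ 0)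
    (hθ34 : Function.Injective (Sum.elim (θ 3) (θ 4) : Fin d ⊕ Fin d → ℂ))
    (h : Polynomial ℂ)
    (hh : h = c 1 * c 2 + c 3 * c 4)
    (hdeg : h.natDegree = 2 * d)
    (β : Fin (2 * d) → ℂ)
    (hβinj : Function.Injective β)
    (hβroot : ∀ i, h.eval (β i) = 0)
    (hβ0 : ∀ i, β i ≠ 0)
    (hβ3 : ∀ i, (c 3).eval (β i) ≠ 0)
    (hβ4 : ∀ i, (c 4).eval (β i) ≠ 0)
    (hli : LinearIndependent ℂ ![c 3, c 4]) :
    Matrix.det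
      (Matrix.of fun i j : Fin (2 * d) =>
        fderiv ℂ
          (fun x : (Fin d → ℂ) × (Fin d → ℂ) => fun i : Fin (2 * d) =>
            (c 1).eval (β i) * (c 2).eval (β i) +
              y 3 * y 4 * ((∏ j, (β i - x.1 j)) * ∏ j, (β i - x.2 j)))
          (θ 3, θ 4)
          (if hj : (j : ℕ) < d then (Pi.single (⟨j, hj⟩ : Fin d) 1, 0)
           else (0, Pi.single (⟨(j : ℕ) - d, by have := j.2; omega⟩ : Fin d) 1))
          i) ≠ 0 := by
  classical
  -- evaluation formulas
  have hev3 : ∀ i, (c 3).eval (β i) = y 3 * ∏ m, (β i - θ 3 m) := by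
    intro i; rw [hc 3]; simp [eval_prod]
  have hev4 : ∀ i, (c 4).eval (β i) = y 4 * ∏ m, (β i - θ 4 m) := by
    intro i; rw [hc 4]; simp [eval_prod]
  have hfac3 : ∀ i k, β i - θ 3 k ≠ 0 := by
    intro i k
    have := hβ3 i
    rw [hev3 i] at this
    have hprod : (∏ m, (β i - θ 3 m)) ≠ 0 := right_ne_zero_of_mul this
    exact Finset.prod_ne_zero_iff.1 hprod k (Finset.mem_univ k)
  have hfac4 : ∀ i k, β i - θ 4 k ≠ 0 := by
    intro i k
    have := hβ4 i
    rw [hev4 i] at this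
    have hprod : (∏ m, (β i - θ 4 m)) ≠ 0 := right_ne_zero_of_mul this
    exact Finset.prod_ne_zero_iff.1 hprod k (Finset.mem_univ k)
  -- the combined root vector
  set γ : Fin (2 * d) → ℂ := fun j =>
    if hj : (j : ℕ) < d then θ 3 ⟨j, hj⟩ else θ 4 ⟨(j : ℕ) - d, by have := j.2; omega⟩ with hγ
  have hγinj : Function.Injective γ := by
    intro j j' hjj
    by_cases h1 : (j : ℕ) < d <;> by_cases h2 : (j' : ℕ) < d
    · simp only [hγ, dif_pos h1, dif_pos h2] at hjj
      have := hθ34 (a₁ := Sum.inl ⟨j, h1⟩) (a₂ := Sum.inl ⟨j', h2⟩) (by simpa using hjj)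
      simp only [Sum.inl.injEq, Fin.mk.injEq] at this
      exact Fin.val_injective this
    · simp only [hγ, dif_pos h1, dif_neg h2] at hjj
      have := hθ34 (a₁ := Sum.inl ⟨j, h1⟩)
        (a₂ := Sum.inr ⟨(j' : ℕ) - d, by have := j'.2; omega⟩) (by simpa using hjj)
      simp at this
    · simp only [hγ, dif_neg h1, dif_pos h2] at hjj
      have := hθ34 (a₁ := Sum.inr ⟨(j : ℕ) - d, by have := j.2; omega⟩)
        (a₂ := Sum.inl ⟨j', h2⟩) (by simpa using hjj)
      simp at this
    · simp only [hγ, dif_neg h1, dif_neg h2] at hjj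
      have := hθ34 (a₁ := Sum.inr ⟨(j : ℕ) - d, by have := j.2; omega⟩)
        (a₂ := Sum.inr ⟨(j' : ℕ) - d, by have := j'.2; omega⟩) (by simpa using hjj)
      simp only [Sum.inr.injEq, Fin.mk.injEq] at this
      exact Fin.val_injective (by omega)
  have hβγ : ∀ i j, β i - γ j ≠ 0 := by
    intro i j
    by_cases hj : (j : ℕ) < d
    · simp only [hγ, dif_pos hj]; exact hfac3 i _
    · simp only [hγ, dif_neg hj]; exact hfac4 i _
  -- derivative linear maps
  set P' : Fin (2 * d) → ((Fin d → ℂ) × (Fin d → ℂ)) →L[ℂ] ℂ := fun i =>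
    ∑ k, (∏ m ∈ Finset.univ.erase k, (β i - θ 3 m)) •
      (-((ContinuousLinearMap.proj k).comp
          (ContinuousLinearMap.fst ℂ (Fin d → ℂ) (Fin d → ℂ)))) with hP'
  set Q' : Fin (2 * d) → ((Fin d → ℂ) × (Fin d → ℂ)) →L[ℂ] ℂ := fun i =>
    ∑ k, (∏ m ∈ Finset.univ.erase k, (β i - θ 4 m)) •
      (-((ContinuousLinearMap.proj k).comp
          (ContinuousLinearMap.snd ℂ (Fin d → ℂ) (Fin d → ℂ)))) with hQ'
  set L : Fin (2 * d) → ((Fin d → ℂ) × (Fin d → ℂ)) →L[ℂ] ℂ := fun i =>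
    (y 3 * y 4) • ((∏ m, (β i - θ 3 m)) • Q' i + (∏ m, (β i - θ 4 m)) • P' i) with hL
  have hφ : ∀ i : Fin (2 * d), HasFDerivAt
      (fun x : (Fin d → ℂ) × (Fin d → ℂ) => (c 1).eval (β i) * (c 2).eval (β i) +
        y 3 * y 4 * ((∏ j, (β i - x.1 j)) * ∏ j, (β i - x.2 j)))
      (L i) (θ 3, θ 4) := by
    intro i
    have hcoord1 : ∀ k, HasFDerivAt (fun x : (Fin d → ℂ) × (Fin d → ℂ) => β i - x.1 k)
        (-((ContinuousLinearMap.proj k).comp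
          (ContinuousLinearMap.fst ℂ (Fin d → ℂ) (Fin d → ℂ)))) (θ 3, θ 4) := by
      intro k
      exact HasFDerivAt.const_sub
        ((hasFDerivAt_apply (𝕜 := ℂ) k (θ 3)).comp (θ 3, θ 4)
          (hasFDerivAt_fst (𝕜 := ℂ) (p := (θ 3, θ 4)))) _
    have hcoord2 : ∀ k, HasFDerivAt (fun x : (Fin d → ℂ) × (Fin d → ℂ) => β i - x.2 k)
        (-((ContinuousLinearMap.proj k).comp
          (ContinuousLinearMap.snd ℂ (Fin d → ℂ) (Fin d → ℂ)))) (θ 3, θ 4) := by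
      intro k
      exact HasFDerivAt.const_sub
        ((hasFDerivAt_apply (𝕜 := ℂ) k (θ 4)).comp (θ 3, θ 4)
          (hasFDerivAt_snd (𝕜 := ℂ) (p := (θ 3, θ 4)))) _
    have hP : HasFDerivAt (fun x : (Fin d → ℂ) × (Fin d → ℂ) => ∏ k, (β i - x.1 k)) (P' i) (θ 3, θ 4) := by
      have := HasFDerivAt.finset_prod (u := Finset.univ)
        (g := fun k (x : (Fin d → ℂ) × (Fin d → ℂ)) => β i - x.1 k)
        (g' := fun k => -((ContinuousLinearMap.proj k).comp
          (ContinuousLinearMap.fst ℂ (Fin d → ℂ) (Fin d → ℂ)))) (fun k _ => hcoord1 k)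
      exact this
    have hQ : HasFDerivAt (fun x : (Fin d → ℂ) × (Fin d → ℂ) => ∏ k, (β i - x.2 k)) (Q' i) (θ 3, θ 4) := by
      have := HasFDerivAt.finset_prod (u := Finset.univ)
        (g := fun k (x : (Fin d → ℂ) × (Fin d → ℂ)) => β i - x.2 k)
        (g' := fun k => -((ContinuousLinearMap.proj k).comp
          (ContinuousLinearMap.snd ℂ (Fin d → ℂ) (Fin d → ℂ)))) (fun k _ => hcoord2 k)
      exact this
    exact ((hP.mul hQ).const_mul (y 3 * y 4)).const_add _
  have hfd : HasFDerivAt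
      (fun x : (Fin d → ℂ) × (Fin d → ℂ) => fun i : Fin (2 * d) =>
        (c 1).eval (β i) * (c 2).eval (β i) +
          y 3 * y 4 * ((∏ j, (β i - x.1 j)) * ∏ j, (β i - x.2 j)))
      (ContinuousLinearMap.pi L) (θ 3, θ 4) := hasFDerivAt_pi.2 hφ
  -- identify the matrix entries
  have hmat : (Matrix.of fun i j : Fin (2 * d) =>
        fderiv ℂ
          (fun x : (Fin d → ℂ) × (Fin d → ℂ) => fun i : Fin (2 * d) =>
            (c 1).eval (β i) * (c 2).eval (β i) +
              y 3 * y 4 * ((∏ j, (β i - x.1 j)) * ∏ j, (β i - x.2 j)))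
          (θ 3, θ 4)
          (if hj : (j : ℕ) < d then (Pi.single (⟨j, hj⟩ : Fin d) 1, 0)
           else (0, Pi.single (⟨(j : ℕ) - d, by have := j.2; omega⟩ : Fin d) 1))
          i)
      = Matrix.of fun i j =>
          (-((c 3).eval (β i) * (c 4).eval (β i))) * (β i - γ j)⁻¹ := by
    ext i j
    rw [Matrix.of_apply, Matrix.of_apply, hfd.fderiv, ContinuousLinearMap.pi_apply, hL]
    by_cases hj : (j : ℕ) < d
    · rw [dif_pos hj]
      have hγj : γ j = θ 3 ⟨j, hj⟩ := by simp only [hγ, dif_pos hj]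
      rw [hγj, hev3, hev4]
      simp only [hP', hQ', ContinuousLinearMap.smul_apply, ContinuousLinearMap.add_apply,
        ContinuousLinearMap.sum_apply, ContinuousLinearMap.neg_apply,
        ContinuousLinearMap.comp_apply, ContinuousLinearMap.coe_fst',
        ContinuousLinearMap.coe_snd', ContinuousLinearMap.proj_apply, smul_eq_mul,
        Pi.zero_apply, mul_zero, neg_zero, Finset.sum_const_zero, Pi.single_apply]
      simp only [mul_neg, mul_ite, mul_one, mul_zero, apply_ite (fun z : ℂ => -z), neg_zero,
        Finset.sum_ite_eq', Finset.mem_univ, if_true]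
      have hsplit : (∏ m, (β i - θ 3 m)) =
          (β i - θ 3 ⟨j, hj⟩) * ∏ m ∈ Finset.univ.erase ⟨j, hj⟩, (β i - θ 3 m) :=
        (Finset.mul_prod_erase _ _ (Finset.mem_univ _)).symm
      rw [hsplit]
      have hne := hfac3 i ⟨j, hj⟩
      field_simp
      ring
    · rw [dif_neg hj]
      have hγj : γ j = θ 4 ⟨(j : ℕ) - d, by have := j.2; omega⟩ := by simp only [hγ, dif_neg hj]
      rw [hγj, hev3, hev4]
      simp only [hP', hQ', ContinuousLinearMap.smul_apply, ContinuousLinearMap.add_apply,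
        ContinuousLinearMap.sum_apply, ContinuousLinearMap.neg_apply,
        ContinuousLinearMap.comp_apply, ContinuousLinearMap.coe_fst',
        ContinuousLinearMap.coe_snd', ContinuousLinearMap.proj_apply, smul_eq_mul,
        Pi.zero_apply, mul_zero, neg_zero, Finset.sum_const_zero, Pi.single_apply]
      simp only [mul_neg, mul_ite, mul_one, mul_zero, apply_ite (fun z : ℂ => -z), neg_zero,
        Finset.sum_ite_eq', Finset.mem_univ, if_true]
      have hsplit : (∏ m, (β i - θ 4 m)) =
          (β i - θ 4 ⟨(j : ℕ) - d, by have := j.2; omega⟩) *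
            ∏ m ∈ Finset.univ.erase (⟨(j : ℕ) - d, by have := j.2; omega⟩ : Fin d),
              (β i - θ 4 m) :=
        (Finset.mul_prod_erase _ _ (Finset.mem_univ _)).symm
      rw [hsplit]
      have hne := hfac4 i (⟨(j : ℕ) - d, by have := j.2; omega⟩ : Fin d)
      field_simp
      ring
  rw [hmat]
  have hfactor : (Matrix.of fun i j : Fin (2 * d) =>
        (-((c 3).eval (β i) * (c 4).eval (β i))) * (β i - γ j)⁻¹)
      = Matrix.diagonal (fun i => -((c 3).eval (β i) * (c 4).eval (β i))) *
        Matrix.of (fun i j : Fin (2 * d) => (β i - γ j)⁻¹) := by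
    ext i j
    rw [Matrix.diagonal_mul]
    simp
  rw [hfactor, Matrix.det_mul, Matrix.det_diagonal]
  refine mul_ne_zero (Finset.prod_ne_zero_iff.2 fun i _ => ?_) ?_
  · exact neg_ne_zero.2 (mul_ne_zero (hβ3 i) (hβ4 i))
  · exact cauchy_det_ne_zero (by omega) β γ hβinj hγinj hβγ
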